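/- Let b_0, …, b_{n-1} be an F-basis of K. Then there exists a nonzero homogeneous polynomial D in n variables over F of total degree n such that for every tuple a = (a_0, …, a_{n-1}) ∈ F^n, the element α = Σ_k a_k·b_k is a normal element of K/F if and only if D(a) ≠ 0. -/

import Mathlib

open MvPolynomial Matrix


/-- there is a nonzero homogeneous polynomial D of degree n in
n variables such that Σ_k a_k·b_k is a normal element of K/F iff D(a) ≠ 0. -/
theorem exists_homogeneous_poly_detecting_normal
    (F K : Type*) [Field F] [Field K] [CharZero F] [Algebra F K]
    [FiniteDimensional F K] [IsGalois F K]
    (n : ℕ) (b : Module.Basis (Fin n) F K) :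
    ∃ D : MvPolynomial (Fin n) F, D ≠ 0 ∧ D.IsHomogeneous n ∧
      ∀ a : Fin n → F,
        (∃ bb : Module.Basis (K ≃ₐ[F] K) F K,
            ∀ g : K ≃ₐ[F] K, bb g = g (∑ k, a k • b k)) ↔
          MvPolynomial.eval a D ≠ 0 := by
  classical
  have hn : Fintype.card (K ≃ₐ[F] K) = n := by
    rw [← Nat.card_eq_fintype_card, IsGalois.card_aut_eq_finrank, Module.finrank_eq_card_basis b, Fintype.card_fin]
  let e : (K ≃ₐ[F] K) ≃ Fin n := Fintype.equivFinOfCardEq hn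
  let c : Fin n → Fin n → Fin n → F := fun i j k => b.repr ((e.symm i) (b k)) j
  let P : Matrix (Fin n) (Fin n) (MvPolynomial (Fin n) F) :=
    fun i j => ∑ k, MvPolynomial.C (c i j k) * MvPolynomial.X k
  refine ⟨P.det, ?_, ?_, ?_⟩
  · -- nonzero
    set φ := algebraMap F K with hφ
    let Bm : Matrix (Fin n) (Fin n) K := fun i k => (e.symm i) (b k)
    have hBdet : Bm.det ≠ 0 := by
      have hT : (Algebra.traceMatrix F b).det ≠ 0 := Algebra.discr_not_zero_of_basis F b
      have key : (Algebra.traceMatrix F b).map φ = Bmᵀ * Bm := by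
        ext k l
        simp only [Matrix.map_apply, Matrix.mul_apply, Algebra.traceMatrix_apply,
          Algebra.traceForm_apply, Matrix.transpose_apply]
        rw [trace_eq_sum_automorphisms, ← Equiv.sum_comp e.symm]
        simp [Bm, _root_.map_mul]
      have h2 : φ (Algebra.traceMatrix F b).det = Bm.det * Bm.det := by
        rw [RingHom.map_det, RingHom.mapMatrix_apply, key, Matrix.det_mul,
          Matrix.det_transpose]
      intro h
      apply hT
      apply (algebraMap F K).injective
      rw [map_zero, h2, h, mul_zero]
    let d : Fin n → K := fun i => if e.symm i = 1 then 1 else 0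
    let aK : Fin n → K := Bm⁻¹.mulVec d
    have hsolve : Bm.mulVec aK = d := by
      rw [Matrix.mulVec_mulVec, Matrix.mul_nonsing_inv _ (isUnit_iff_ne_zero.mpr hBdet),
        Matrix.one_mulVec]
    have hkey : ∀ g : K ≃ₐ[F] K, ∑ k, g (b k) * aK k = if g = 1 then 1 else 0 := by
      intro g
      have := congrFun hsolve (e g)
      simpa [Matrix.mulVec, dotProduct, Bm, d] using this
    let MK : Matrix (Fin n) (Fin n) K := fun i j => ∑ k, φ (c i j k) * aK k
    have hMK : MvPolynomial.eval aK (MvPolynomial.map φ P.det) = MK.det := by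
      rw [RingHom.map_det, RingHom.map_det, RingHom.mapMatrix_apply, RingHom.mapMatrix_apply]
      congr 1
      ext i j
      change MvPolynomial.eval aK (MvPolynomial.map φ (P i j)) = MK i j
      simp [P, MK, Matrix.map_apply, map_sum, _root_.map_mul]
    let πe : Equiv.Perm (Fin n) :=
      (e.symm.trans (Equiv.inv (K ≃ₐ[F] K))).trans e
    have hQ : MK * Bmᵀ = (1 : Matrix (Fin n) (Fin n) K).submatrix πe id := by
      ext i i'
      have inner : ∀ k, ∑ j, φ (c i j k) * (e.symm i') (b j)
          = (e.symm i') ((e.symm i) (b k)) := by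
        intro k
        have h3 := congrArg (e.symm i') (b.sum_repr ((e.symm i) (b k)))
        rw [map_sum] at h3
        simpa [_root_.map_smul, Algebra.smul_def, _root_.map_mul, c] using h3
      have lhs_eq : (MK * Bmᵀ) i i'
          = ∑ k, ((e.symm i') * (e.symm i)) (b k) * aK k := by
        rw [Matrix.mul_apply]
        simp only [Matrix.mul_apply, MK, Bm, Matrix.transpose_apply]
        simp_rw [Finset.sum_mul]
        rw [Finset.sum_comm]
        refine Finset.sum_congr rfl fun k _ => ?_
        rw [AlgEquiv.mul_apply, ← inner k, Finset.sum_mul]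
        exact Finset.sum_congr rfl fun j _ => by change _ * _ * (e.symm i') (b j) = _; ring
      rw [lhs_eq, hkey]
      simp only [Matrix.submatrix_apply, Matrix.one_apply, id]
      have hiff : (e.symm i') * (e.symm i) = 1 ↔ πe i = i' := by
        rw [mul_eq_one_iff_eq_inv, Equiv.symm_apply_eq]
        simp [πe, eq_comm]
      simp only [hiff]
    have hQdet : (MK * Bmᵀ).det ≠ 0 := by
      rw [hQ, Matrix.det_permute, Matrix.det_one, mul_one]
      haveI : CharZero K := charZero_of_injective_algebraMap (algebraMap F K).injective
      exact Int.cast_ne_zero.mpr (Units.ne_zero _)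
    intro h
    apply hQdet
    rw [Matrix.det_mul]
    have : MK.det = 0 := by
      rw [← hMK, h, map_zero, map_zero]
    rw [this, zero_mul]
  · -- homogeneous
    rw [Matrix.det_apply]
    apply MvPolynomial.IsHomogeneous.sum
    intro σ _
    have hprod : (∏ i, P (σ i) i).IsHomogeneous n := by
      have h1 : ∀ i j, (P i j).IsHomogeneous 1 := by
        intro i j
        apply MvPolynomial.IsHomogeneous.sum
        intro k _
        simpa using (MvPolynomial.isHomogeneous_C _ (c i j k)).mul
          (MvPolynomial.isHomogeneous_X F k)
      have := MvPolynomial.IsHomogeneous.prod Finset.univ (fun i => P (σ i) i)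
        (fun _ => 1) (fun i _ => h1 _ _)
      simpa using this
    rw [Units.smul_def, zsmul_eq_mul,
      ← map_intCast (MvPolynomial.C : F →+* MvPolynomial (Fin n) F)]
    simpa using (MvPolynomial.isHomogeneous_C (Fin n)
      (((Equiv.Perm.sign σ : ℤ) : F))).mul hprod
  · -- eval characterization
    intro a
    set α := ∑ k, a k • b k with hα
    let v : Fin n → K := fun i => (e.symm i) α
    have heval : MvPolynomial.eval a P.det = (b.toMatrix v).det := by
      rw [RingHom.map_det, RingHom.mapMatrix_apply, ← Matrix.det_transpose (b.toMatrix v)]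
      congr 1
      ext i j
      simp only [Matrix.map_apply, map_sum, _root_.map_mul, eval_C, eval_X,
        Matrix.transpose_apply, Module.Basis.toMatrix_apply]
      have : v i = ∑ k, a k • (e.symm i) (b k) := by
        simp [v, hα, map_sum]
      rw [this, map_sum]
      simp [c, Finsupp.sum_apply', mul_comm]
    rw [heval, ← Module.Basis.det_apply]
    constructor
    · rintro ⟨bb, hbb⟩
      have hv : v = ⇑(bb.reindex e) := by
        funext i
        simp [v, Module.Basis.reindex_apply, hbb]
      rw [hv]
      exact (Module.Basis.is_basis_iff_det b).mp
        ⟨(bb.reindex e).linearIndependent, (bb.reindex e).span_eq⟩ |>.ne_zero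
    · intro hne
      obtain ⟨hli, hsp⟩ := (Module.Basis.is_basis_iff_det b).mpr (isUnit_iff_ne_zero.mpr hne)
      refine ⟨(Module.Basis.mk hli hsp.ge).reindex e.symm, fun g => ?_⟩
      simp [Module.Basis.reindex_apply, Module.Basis.coe_mk, v]
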